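/- For every Boolean function f: {0,1}^n → {0,1}, the certificate complexity satisfies C(f) ≤ bs(f)·s(f). -/

import Mathlib

open Finset

section Core
variable {ι : Type} [Fintype ι] [DecidableEq ι]

/-- Flip the bits of `x` indexed by the block `B`. -/
def flipSet (x : ι → Bool) (B : Finset ι) : ι → Bool :=
  fun i => if i ∈ B then !(x i) else x i

/-- Sensitivity of `f` at input `x`. -/
def sensAt (f : (ι → Bool) → Bool) (x : ι → Bool) : ℕ :=
  (univ.filter fun i => f (flipSet x {i}) ≠ f x).card

/-- Sensitivity of `f`. -/
def sens (f : (ι → Bool) → Bool) : ℕ :=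
  univ.sup fun x => sensAt f x

/-- Block sensitivity of `f` at `x`: the maximal number of pairwise disjoint
sensitive blocks at `x`. -/
noncomputable def bsAt (f : (ι → Bool) → Bool) (x : ι → Bool) : ℕ :=
  sSup {r | ∃ B : Fin r → Finset ι,
    (∀ j, f (flipSet x (B j)) ≠ f x) ∧
    ∀ j₁ j₂, j₁ ≠ j₂ → Disjoint (B j₁) (B j₂)}

/-- Block sensitivity of `f`. -/
noncomputable def blockSens (f : (ι → Bool) → Bool) : ℕ :=
  univ.sup fun x => bsAt f x

/-- `S` is a certificate for `f` at `x`: every input agreeing with `x` on `S`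
 has the same `f`-value as `x`. -/
def IsCert (f : (ι → Bool) → Bool) (x : ι → Bool) (S : Finset ι) : Prop :=
  ∀ y : ι → Bool, (∀ i ∈ S, y i = x i) → f y = f x

/-- Certificate complexity of `f` at `x`. -/
noncomputable def certAt (f : (ι → Bool) → Bool) (x : ι → Bool) : ℕ :=
  sInf {c | ∃ S : Finset ι, S.card = c ∧ IsCert f x S}

/-- Certificate complexity of `f`. -/
noncomputable def certC (f : (ι → Bool) → Bool) : ℕ :=
  univ.sup fun x => certAt f x

/-- 0-certificate complexity of `f`. -/
noncomputable def cert0 (f : (ι → Bool) → Bool) : ℕ :=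
  (univ.filter fun x => f x = false).sup fun x => certAt f x

/-- 1-certificate complexity of `f`. -/
noncomputable def cert1 (f : (ι → Bool) → Bool) : ℕ :=
  (univ.filter fun x => f x = true).sup fun x => certAt f x

/-- The restriction of `f` by the partial assignment `ρ` (a variable `i` with
`ρ i = none` is left unset; otherwise it is fixed to the given value). The
restricted function depends only on the unset variables. -/
def restrictBF (f : (ι → Bool) → Bool) (ρ : ι → Option Bool) : (ι → Bool) → Bool :=
  fun x => f fun i => (ρ i).getD (x i)

/-- Number of unset variables of a partial assignment. -/
def unsetCard (ρ : ι → Option Bool) : ℕ :=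
  (univ.filter fun i => ρ i = none).card

end Core


section Aux
open scoped Classical
variable {ι : Type} [Fintype ι] [DecidableEq ι]

def SensB (f : (ι → Bool) → Bool) (x : ι → Bool) (B : Finset ι) : Prop :=
  f (flipSet x B) ≠ f x

lemma flipSet_empty (x : ι → Bool) : flipSet x ∅ = x := by
  funext i; simp [flipSet]

lemma SensB.nonempty {f : (ι → Bool) → Bool} {x : ι → Bool} {B : Finset ι}
    (h : SensB f x B) : B.Nonempty := by
  rcases B.eq_empty_or_nonempty with rfl | hB
  · simp [SensB, flipSet_empty] at h
  · exact hB

lemma flipSet_flip_flip {x : ι → Bool} {B : Finset ι} {i : ι} (hi : i ∈ B) :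
    flipSet (flipSet x B) {i} = flipSet x (B.erase i) := by
  funext j
  by_cases hj : j = i
  · subst hj; simp [flipSet, hi]
  · simp [flipSet, hj, Finset.mem_erase]

lemma exists_minSens {f : (ι → Bool) → Bool} {x : ι → Bool} {B : Finset ι}
    (hB : SensB f x B) :
    ∃ B', B' ⊆ B ∧ SensB f x B' ∧ ∀ C ⊂ B', ¬ SensB f x C := by
  obtain ⟨B', hB'mem, hmin⟩ := Finset.exists_min_image
    (B.powerset.filter fun C => SensB f x C) Finset.card
    ⟨B, by simp [hB]⟩
  simp only [mem_filter, mem_powerset] at hB'mem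
  refine ⟨B', hB'mem.1, hB'mem.2, fun C hC hCs => ?_⟩
  have := hmin C (by simp [mem_filter, mem_powerset, hC.subset.trans hB'mem.1, hCs])
  exact absurd this (not_le.mpr (Finset.card_lt_card hC))

lemma minSens_card_le {f : (ι → Bool) → Bool} {x : ι → Bool} {B : Finset ι}
    (hB : SensB f x B) (hmin : ∀ C ⊂ B, ¬ SensB f x C) :
    B.card ≤ sens f := by
  have hsub : B ⊆ univ.filter
      fun i => f (flipSet (flipSet x B) {i}) ≠ f (flipSet x B) := by
    intro i hi
    simp only [mem_filter, mem_univ, true_and]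
    rw [flipSet_flip_flip hi]
    have h1 : ¬ SensB f x (B.erase i) := hmin _ (Finset.erase_ssubset hi)
    simp only [SensB, not_not] at h1
    rw [h1]
    exact fun h => hB h.symm
  calc B.card ≤ _ := Finset.card_le_card hsub
    _ = sensAt f (flipSet x B) := rfl
    _ ≤ sens f := Finset.le_sup (mem_univ _)

lemma family_card_le_bsAt {f : (ι → Bool) → Bool} {x : ι → Bool}
    {F : Finset (Finset ι)}
    (hs : ∀ B ∈ F, SensB f x B)
    (hd : ∀ B ∈ F, ∀ B' ∈ F, B ≠ B' → Disjoint B B') :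
    F.card ≤ bsAt f x := by
  have hbdd : BddAbove {r | ∃ B : Fin r → Finset ι,
      (∀ j, f (flipSet x (B j)) ≠ f x) ∧
      ∀ j₁ j₂, j₁ ≠ j₂ → Disjoint (B j₁) (B j₂)} := by
    refine ⟨Fintype.card ι, fun r hr => ?_⟩
    obtain ⟨B, hB, hBd⟩ := hr
    have hne : ∀ j, (B j).Nonempty := fun j => SensB.nonempty (hB j)
    choose g hg using hne
    have hinj : Function.Injective g := by
      intro j₁ j₂ h
      by_contra hne'
      have h2 := Finset.disjoint_left.mp (hBd j₁ j₂ hne') (hg j₁)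
      rw [h] at h2
      exact h2 (hg j₂)
    simpa using Fintype.card_le_of_injective g hinj
  refine le_csSup hbdd ?_
  refine ⟨fun j => (F.equivFin.symm j : Finset ι), fun j => ?_, fun j₁ j₂ hj => ?_⟩
  · exact hs _ (F.equivFin.symm j).2
  · refine hd _ (F.equivFin.symm j₁).2 _ (F.equivFin.symm j₂).2 ?_
    intro h
    exact hj (F.equivFin.symm.injective (Subtype.ext h))

lemma certAt_le {f : (ι → Bool) → Bool} (x : ι → Bool) :
    certAt f x ≤ bsAt f x * sens f := by
  set P : Finset (Finset ι) → Prop := fun F =>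
    (∀ B ∈ F, SensB f x B ∧ ∀ C ⊂ B, ¬ SensB f x C) ∧
    ∀ B ∈ F, ∀ B' ∈ F, B ≠ B' → Disjoint B B' with hP
  obtain ⟨F, hF, hmax⟩ := Finset.exists_max_image
    (univ.filter P) Finset.card ⟨∅, by simp [hP]⟩
  simp only [mem_filter, mem_univ, true_and] at hF
  set S : Finset ι := F.biUnion id with hS
  have hcert : IsCert f x S := by
    intro y hy
    by_contra hfy
    set B : Finset ι := univ.filter fun i => y i ≠ x i with hB
    have hflip : flipSet x B = y := by
      funext i
      by_cases h : y i = x i <;>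
        simp only [flipSet, hB, mem_filter, mem_univ, true_and, h] <;>
        simp [h] <;> (revert h; cases x i <;> cases y i <;> simp)
    have hBsens : SensB f x B := by rw [SensB, hflip]; exact hfy
    have hBS : Disjoint B S := by
      rw [Finset.disjoint_left]
      intro i hi hiS
      simp only [hB, mem_filter] at hi
      exact hi.2 (hy i hiS)
    obtain ⟨B', hB'B, hB's, hB'min⟩ := exists_minSens hBsens
    have hB'S : Disjoint B' S := hBS.mono_left hB'B
    have hB'F : B' ∉ F := by
      intro hmem
      have : B' ⊆ S := Finset.subset_biUnion_of_mem id hmem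
      have := Finset.disjoint_left.mp hB'S
      obtain ⟨i, hi⟩ := SensB.nonempty hB's
      exact this hi (‹B' ⊆ S› hi)
    have hPins : P (insert B' F) := by
      constructor
      · intro C hC
        rcases Finset.mem_insert.mp hC with rfl | hC
        · exact ⟨hB's, hB'min⟩
        · exact hF.1 C hC
      · intro C hC C' hC' hne
        have hsub : ∀ D ∈ F, id D ⊆ F.biUnion id := fun D hD =>
          Finset.subset_biUnion_of_mem id hD
        rcases Finset.mem_insert.mp hC with rfl | hCF
        · rcases Finset.mem_insert.mp hC' with rfl | hC'F
          · exact absurd rfl hne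
          · exact hB'S.mono_right (hsub _ hC'F)
        · rcases Finset.mem_insert.mp hC' with rfl | hC'F
          · exact (hB'S.mono_right (hsub _ hCF)).symm
          · exact hF.2 C hCF C' hC'F hne
    have := hmax (insert B' F) (Finset.mem_filter.mpr ⟨mem_univ _, hPins⟩)
    rw [Finset.card_insert_of_notMem hB'F] at this
    omega
  have h1 : certAt f x ≤ S.card := Nat.sInf_le ⟨S, rfl, hcert⟩
  have h2 : S.card ≤ F.card * sens f := by
    calc S.card ≤ ∑ B ∈ F, (id B).card := Finset.card_biUnion_le
      _ ≤ F.card * sens f := by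
        rw [← smul_eq_mul]
        exact Finset.sum_le_card_nsmul F _ (sens f)
          fun B hB => minSens_card_le (hF.1 B hB).1 (hF.1 B hB).2
  have h3 : F.card ≤ bsAt f x :=
    family_card_le_bsAt (fun B hB => (hF.1 B hB).1) hF.2
  calc certAt f x ≤ F.card * sens f := h1.trans h2
    _ ≤ bsAt f x * sens f := Nat.mul_le_mul_right _ h3

end Aux

/-- `C(f) ≤ bs(f) · s(f)`. -/
theorem certC_le_blockSens_mul_sens
    {n : ℕ} (f : (Fin n → Bool) → Bool) :
    certC f ≤ blockSens f * sens f := by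
  refine Finset.sup_le fun x _ => ?_
  calc certAt f x ≤ bsAt f x * sens f := certAt_le x
    _ ≤ blockSens f * sens f :=
      Nat.mul_le_mul_right _ (Finset.le_sup (mem_univ x))
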